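/- With the hypotheses of the previous statement (z = z_i + z_j a p-central element with exactly two eigencomponents for conjugation by the p-central element x in a division algebra of degree p), the F-span F z_i + F z_j is a p-central space with diagonal exponentiation form: for all u, v ∈ F, (u z_i + v z_j)^p = u^p z_i^p + v^p z_j^p. -/

import Mathlib

open Polynomial Finset

private lemma conj_pow_aux {D : Type*} [DivisionRing D] {x : D} (hx : x ≠ 0) (d : D) :
    ∀ n : ℕ, (x⁻¹ * d * x) ^ n = x⁻¹ * d ^ n * x
  | 0 => by simp [inv_mul_cancel₀ hx]
  | n + 1 => by
    rw [pow_succ, conj_pow_aux hx d n, pow_succ]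
    simp [mul_assoc, mul_inv_cancel_left₀ hx]

private lemma coeff_top_aux {R : Type*} [Ring R] (a b : R) :
    ∀ n : ℕ, ((C a * X + C b) ^ n).coeff n = a ^ n
  | 0 => by simp
  | n + 1 => by
    have hdeg : ((C a * X + C b) ^ n).natDegree < n + 1 := by
      refine Nat.lt_succ_of_le (natDegree_pow_le.trans ?_)
      have h1 : (C a * X + C b).natDegree ≤ 1 :=
        (natDegree_add_le _ _).trans
          (max_le ((natDegree_C_mul_le _ _).trans natDegree_X_le) (by simp))
      calc n * (C a * X + C b).natDegree ≤ n * 1 := Nat.mul_le_mul_left n h1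
        _ = n := mul_one n
    rw [pow_succ, mul_add, coeff_add, ← mul_assoc, coeff_mul_X, coeff_mul_C, coeff_top_aux a b n,
      coeff_mul_C, coeff_eq_zero_of_natDegree_lt hdeg, zero_mul, add_zero, ← pow_succ]

private lemma eval_pow_aux {F D : Type*} [Field F] [DivisionRing D] [Algebra F D]
    (zi zj : D) (u : F) (n : ℕ) :
    Polynomial.eval₂ (RingHom.id D) (algebraMap F D u) ((C zi * X + C zj) ^ n)
      = (u • zi + zj) ^ n := by
  have hcomm : ∀ d : D, Commute ((RingHom.id D) d) (algebraMap F D u) :=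
    fun d => (Algebra.commutes u d).symm
  have h : Polynomial.eval₂ (RingHom.id D) (algebraMap F D u) ((C zi * X + C zj) ^ n)
      = (Polynomial.eval₂RingHom' (RingHom.id D) (algebraMap F D u) hcomm) ((C zi * X + C zj) ^ n) := rfl
  rw [h, map_pow, map_add, map_mul]
  simp only [eval₂RingHom'_apply, eval₂_C, eval₂_X, RingHom.id_apply]
  rw [Algebra.smul_def, ← Algebra.commutes u zi]

theorem two_eigencomponents_diagonal_form
    {F D : Type*} [Field F] [DivisionRing D] [Algebra F D]
    (p : ℕ) (hp : p.Prime) (hpF : (p : F) ≠ 0)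
    (ρ : F) (hρ : IsPrimitiveRoot ρ p)
    (hcentral : ∀ a : D, (∀ b : D, a * b = b * a) → ∃ c : F, a = algebraMap F D c)
    (hdim : Module.finrank F D = p ^ 2)
    (x z : D) (α β : F) (hα : α ≠ 0) (hβ : β ≠ 0)
    (hxp : x ^ p = algebraMap F D α) (hzp : z ^ p = algebraMap F D β)
    (hxnc : ∀ s : F, x ≠ algebraMap F D s) (hznc : ∀ s : F, z ≠ algebraMap F D s)
    (i j : ℕ) (hi : i < p) (hj : j < p) (hij : i ≠ j)
    (zi zj : D) (hzi0 : zi ≠ 0) (hzj0 : zj ≠ 0)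
    (hz : z = zi + zj)
    (hziX : zi * x = ρ ^ i • (x * zi)) (hzjX : zj * x = ρ ^ j • (x * zj)) :
    ∀ u v : F, (u • zi + v • zj) ^ p = u ^ p • zi ^ p + v ^ p • zj ^ p := by
  haveI : Fact p.Prime := ⟨hp⟩
  have hp0 : 0 < p := hp.pos
  have hx0 : x ≠ 0 := fun h => hxnc 0 (by simp [h])
  have hρp : ρ ^ p = 1 := hρ.pow_eq_one
  -- power congruence mod p
  have hmodρ : ∀ c : ℕ, ρ ^ c = ρ ^ (c % p) := by
    intro c
    conv_lhs => rw [← Nat.div_add_mod c p]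
    rw [pow_add, pow_mul, hρp, one_pow, one_mul]
  have hpowρ : ∀ a b : ℕ, ((a : ZMod p) = (b : ZMod p)) → ρ ^ a = ρ ^ b := by
    intro a b hab
    have h' : a % p = b % p := (ZMod.natCast_eq_natCast_iff a b p).mp hab
    rw [hmodρ a, hmodρ b, h']
  -- geometric sums
  have hgeo : ∀ d : ℕ, ¬ (p ∣ d) → ∑ k ∈ range p, (ρ ^ d) ^ k = 0 := by
    intro d hd
    have hne : ρ ^ d ≠ 1 := fun h => hd ((hρ.pow_eq_one_iff_dvd d).mp h)
    have hpp : (ρ ^ d) ^ p = 1 := by rw [← pow_mul, mul_comm, pow_mul, hρp, one_pow]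
    have h := geom_sum_mul (ρ ^ d) p
    rw [hpp, sub_self] at h
    rcases mul_eq_zero.mp h with h | h
    · exact h
    · exact absurd (sub_eq_zero.mp h) hne
  -- conjugation action
  have conj_smul : ∀ (c : F) (w : D), x⁻¹ * (c • w) * x = c • (x⁻¹ * w * x) := by
    intro c w; rw [mul_smul_comm, smul_mul_assoc]
  have hconj_i : x⁻¹ * zi * x = ρ ^ i • zi := by
    rw [mul_assoc, hziX, mul_smul_comm, ← mul_assoc, inv_mul_cancel₀ hx0, one_mul]
  have hconj_j : x⁻¹ * zj * x = ρ ^ j • zj := by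
    rw [mul_assoc, hzjX, mul_smul_comm, ← mul_assoc, inv_mul_cancel₀ hx0, one_mul]
  -- iterated conjugates of z are p-th roots of β
  have hy : ∀ m : ℕ, (ρ ^ (m * i) • zi + ρ ^ (m * j) • zj) ^ p = algebraMap F D β := by
    intro m
    induction m with
    | zero =>
      simp only [Nat.zero_mul, pow_zero, one_smul]
      rw [← hz]; exact hzp
    | succ m ih =>
      have hstep : ρ ^ ((m + 1) * i) • zi + ρ ^ ((m + 1) * j) • zj
          = x⁻¹ * (ρ ^ (m * i) • zi + ρ ^ (m * j) • zj) * x := by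
        rw [mul_add, add_mul _ _ x, conj_smul, conj_smul, hconj_i, hconj_j, smul_smul, smul_smul,
          ← pow_add, ← pow_add]
        congr 2 <;> ring
      rw [hstep, conj_pow_aux hx0 _ p, ih, ← Algebra.commutes β x⁻¹, mul_assoc,
        inv_mul_cancel₀ hx0, mul_one]
  -- all ρ-th-root twists have p-th power β
  have hkey : ∀ k : ℕ, (ρ ^ k • zi + zj) ^ p = algebraMap F D β := by
    intro k
    have hdij : (i : ZMod p) - (j : ZMod p) ≠ 0 := by
      intro h
      apply hij
      have h2 : (i : ZMod p) = (j : ZMod p) := sub_eq_zero.mp h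
      have := congrArg ZMod.val h2
      rwa [ZMod.val_cast_of_lt hi, ZMod.val_cast_of_lt hj] at this
    set m : ℕ := ((k : ZMod p) * ((i : ZMod p) - (j : ZMod p))⁻¹).val with hm
    have hmeq : (m : ZMod p) * ((i : ZMod p) - (j : ZMod p)) = (k : ZMod p) := by
      rw [hm, ZMod.natCast_val, ZMod.cast_id, mul_assoc, inv_mul_cancel₀ hdij, mul_one]
    have hcast : ((m * i : ℕ) : ZMod p) = ((k + m * j : ℕ) : ZMod p) := by
      push_cast
      linear_combination hmeq
    have h1 : ρ ^ (m * i) = ρ ^ k * ρ ^ (m * j) := by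
      rw [← pow_add]; exact hpowρ _ _ hcast
    have h2 := hy m
    have h3 : ρ ^ (m * i) • zi + ρ ^ (m * j) • zj = ρ ^ (m * j) • (ρ ^ k • zi + zj) := by
      rw [smul_add, smul_smul, mul_comm (ρ ^ (m * j)) (ρ ^ k), ← h1]
    rw [h3, _root_.smul_pow, ← pow_mul, mul_comm (m * j) p, pow_mul, hρp, one_pow, one_smul] at h2
    exact h2
  -- the polynomial q and its coefficients
  set q : D[X] := (C zi * X + C zj) ^ p with hqdef
  have hqdeg : q.natDegree < p + 1 := by
    refine Nat.lt_succ_of_le (natDegree_pow_le.trans ?_)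
    have h1 : (C zi * X + C zj).natDegree ≤ 1 :=
      (natDegree_add_le _ _).trans
        (max_le ((natDegree_C_mul_le _ _).trans natDegree_X_le) (by simp))
    calc p * (C zi * X + C zj).natDegree ≤ p * 1 := Nat.mul_le_mul_left p h1
      _ = p := mul_one p
  have hev : ∀ u : F, (u • zi + zj) ^ p
      = ∑ a ∈ range (p + 1), q.coeff a * (algebraMap F D u) ^ a := by
    intro u
    rw [← eval_pow_aux zi zj u p, ← hqdef,
      Polynomial.eval₂_eq_sum_range' (RingHom.id D) hqdeg (algebraMap F D u)]
    simp
  have hainj : Function.Injective (algebraMap F D) := (algebraMap F D).injective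
  -- coefficient 0
  have hc0 : q.coeff 0 = zj ^ p := by
    have h0 := hev 0
    rw [map_zero] at h0
    rw [Finset.sum_eq_single 0 (fun b _ hb0 => by
        rw [zero_pow hb0, mul_zero]) (by simp)] at h0
    simpa using h0.symm
  -- top coefficient
  have hcp : q.coeff p = zi ^ p := coeff_top_aux zi zj p
  -- middle coefficients vanish
  have hmid : ∀ a, 0 < a → a < p → q.coeff a = 0 := by
    intro a ha0 hap
    have hsum : ∑ k ∈ range p, ρ ^ (k * (p - a)) • ((ρ ^ k • zi + zj) ^ p)
        = q.coeff a * algebraMap F D (p : F) := by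
      calc ∑ k ∈ range p, ρ ^ (k * (p - a)) • ((ρ ^ k • zi + zj) ^ p)
          = ∑ k ∈ range p, ∑ b ∈ range (p + 1),
              q.coeff b * algebraMap F D (ρ ^ (k * (p - a) + k * b)) := by
            refine Finset.sum_congr rfl fun k _ => ?_
            rw [hev (ρ ^ k), Finset.smul_sum]
            refine Finset.sum_congr rfl fun b _ => ?_
            rw [← mul_smul_comm, Algebra.smul_def, ← map_pow, ← map_mul, ← pow_mul, ← pow_add]
        _ = ∑ b ∈ range (p + 1),
              q.coeff b * algebraMap F D (∑ k ∈ range p, (ρ ^ ((p - a) + b)) ^ k) := by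
            rw [Finset.sum_comm]
            refine Finset.sum_congr rfl fun b _ => ?_
            rw [← Finset.mul_sum, ← map_sum]
            congr 1
            refine congrArg _ (Finset.sum_congr rfl fun k _ => ?_)
            rw [← pow_mul]
            congr 1
            ring
        _ = q.coeff a * algebraMap F D (p : F) := by
            rw [Finset.sum_eq_single a]
            · have hpa : (p - a) + a = p := Nat.sub_add_cancel hap.le
              rw [hpa, hρp]
              congr 1
              refine congrArg _ ?_
              simp [Finset.sum_const]
            · intro b hb hba
              have hnd : ¬ p ∣ ((p - a) + b) := by
                rintro ⟨c, hc⟩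
                have hb' : b < p + 1 := Finset.mem_range.mp hb
                rcases c with _ | _ | c
                · omega
                · omega
                · have h2 : p * 2 ≤ p * (c + 1 + 1) := Nat.mul_le_mul_left p (by omega)
                  omega
              rw [hgeo _ hnd, map_zero, mul_zero]
            · intro ha
              exact absurd (Finset.mem_range.mpr (by omega)) ha
    have hzero : ∑ k ∈ range p, ρ ^ (k * (p - a)) • ((ρ ^ k • zi + zj) ^ p) = 0 := by
      have h1 : ∀ k ∈ range p, ρ ^ (k * (p - a)) • ((ρ ^ k • zi + zj) ^ p)
          = (ρ ^ (p - a)) ^ k • algebraMap F D β := by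
        intro k _
        rw [hkey k, ← pow_mul, mul_comm (p - a) k]
      rw [Finset.sum_congr rfl h1, ← Finset.sum_smul, hgeo (p - a) (by
        rintro ⟨c, hc⟩
        rcases c with _ | c
        · omega
        · have h2 : p * 1 ≤ p * (c + 1) := Nat.mul_le_mul_left p (by omega)
          omega), zero_smul]
    rw [hzero] at hsum
    have hpD : algebraMap F D (p : F) ≠ 0 := fun h => hpF (hainj (by rw [h, map_zero]))
    rcases mul_eq_zero.mp hsum.symm with h | h
    · exact h
    · exact absurd h hpD
  -- main diagonal formula for v = 1
  have hmain : ∀ u : F, (u • zi + zj) ^ p = u ^ p • zi ^ p + zj ^ p := by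
    intro u
    rw [hev u, Finset.sum_range_succ]
    have hrest : ∑ a ∈ range p, q.coeff a * (algebraMap F D u) ^ a = zj ^ p := by
      rw [Finset.sum_eq_single 0]
      · simp [hc0]
      · intro b hb hb0
        rw [hmid b (Nat.pos_of_ne_zero hb0) (Finset.mem_range.mp hb), zero_mul]
      · intro h
        exact absurd (Finset.mem_range.mpr hp0) h
    rw [hrest, hcp, ← map_pow, Algebra.smul_def, ← Algebra.commutes (u ^ p) (zi ^ p), add_comm]
  -- conclude
  intro u v
  rcases eq_or_ne v 0 with hv | hv
  · subst hv
    rw [zero_smul, add_zero, zero_pow hp0.ne', zero_smul, add_zero, _root_.smul_pow]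
  · have hsplit : u • zi + v • zj = v • ((u / v) • zi + zj) := by
      rw [smul_add, smul_smul, mul_div_cancel₀ u hv]
    rw [hsplit, _root_.smul_pow, hmain (u / v), smul_add, smul_smul]
    congr 2
    rw [← mul_pow, mul_div_cancel₀ u hv]
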